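/- The set of pairs (x, y) ∈ Λ × Λ such that x and y are independent sub-σ-fields is closed in the product of the strong operator topologies. -/

import Mathlib

open MeasureTheory Filter Topology

set_option synthInstance.maxHeartbeats 400000
noncomputable section

variable {Ω : Type*}

/-- The trivial σ-field augmented with all null sets: the least element `0` of `Λ`. -/
def nullSF {m0 : MeasurableSpace Ω} (μ : Measure Ω) : MeasurableSpace Ω :=
  MeasurableSpace.generateFrom {s : Set Ω | μ s = 0}

/-- Membership in `Λ`: a sub-σ-field of `m0` containing all null sets. -/
def InLam {m0 : MeasurableSpace Ω} (μ : Measure Ω) (m : MeasurableSpace Ω) : Prop :=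
  m ≤ m0 ∧ nullSF μ ≤ m

set_option synthInstance.maxHeartbeats 400000 in
/-- The type `L₂` subspace `L₂(m)` of `H = L₂(Ω, F, P)`. -/
abbrev L2S {m0 : MeasurableSpace Ω} (μ : Measure Ω) (m : MeasurableSpace Ω) :
    Submodule ℝ (Lp ℝ 2 μ) :=
  @lpMeas Ω ℝ ℝ _ _ _ m m0 2 μ

/-- The orthogonal projection of `H = L₂(Ω, F, P)` onto `L₂(m)`. -/
def Q {m0 : MeasurableSpace Ω} (μ : Measure Ω) (m : MeasurableSpace Ω) :
    Lp ℝ 2 μ →L[ℝ] Lp ℝ 2 μ :=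
  letI := Classical.dec (m ≤ m0)
  if hm : m ≤ m0 then
    haveI : Fact (m ≤ m0) := ⟨hm⟩
    (L2S μ m).subtypeL.comp ((L2S μ m).orthogonalProjectionOnto)
  else 0

/-- Strong operator convergence of the projections `Q (x n)` to `Q l`. -/
def SOTLim {m0 : MeasurableSpace Ω} (μ : Measure Ω) (x : ℕ → MeasurableSpace Ω)
    (l : MeasurableSpace Ω) : Prop :=
  ∀ f : Lp ℝ 2 μ, Tendsto (fun n => Q μ (x n) f) atTop (𝓝 (Q μ l f))

/-- Independence of two sub-σ-fields. -/
def IndepSF {m0 : MeasurableSpace Ω} (μ : Measure Ω) (x y : MeasurableSpace Ω) : Prop :=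
  ∀ s t : Set Ω, MeasurableSet[x] s → MeasurableSet[y] t → μ (s ∩ t) = μ s * μ t

open ProbabilityTheory

lemma Q_eq_condexpL2 {m0 : MeasurableSpace Ω} (μ : Measure Ω) {m : MeasurableSpace Ω} (hm : m ≤ m0) (f : Lp ℝ 2 μ) :
    Q μ m f = (condExpL2 ℝ ℝ hm f : Lp ℝ 2 μ) := by
  rw [Q, dif_pos hm]
  rfl

lemma Q_self {m0 : MeasurableSpace Ω} (μ : Measure Ω) {m : MeasurableSpace Ω} (hm : m ≤ m0) {f : Lp ℝ 2 μ}
    (hf : f ∈ L2S (m0 := m0) μ m) : Q μ m f = f := by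
  haveI : Fact (m ≤ m0) := ⟨hm⟩
  rw [Q, dif_pos hm]
  change (((L2S μ m).orthogonalProjectionOnto f : L2S (m0 := m0) μ m) : Lp ℝ 2 μ) = f
  rw [show f = ((⟨f, hf⟩ : L2S (m0 := m0) μ m) : Lp ℝ 2 μ) from rfl,
    Submodule.orthogonalProjectionOnto_mem_subspace_eq_self]

lemma integral_Q {m0 : MeasurableSpace Ω} (μ : Measure Ω) [IsProbabilityMeasure μ]
    {m : MeasurableSpace Ω} (hm : m ≤ m0) (f : Lp ℝ 2 μ) : ∫ a, Q μ m f a ∂μ = ∫ a, f a ∂μ := by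
  rw [Q_eq_condexpL2 μ hm f]
  have h := integral_condExpL2_eq (𝕜 := ℝ) hm f MeasurableSet.univ (measure_ne_top μ _)
  simpa [setIntegral_univ] using h

lemma inner_Q_indep {m0 : MeasurableSpace Ω} (μ : Measure Ω) [IsProbabilityMeasure μ]
    {x y : MeasurableSpace Ω} (hx : x ≤ m0) (hy : y ≤ m0)
    (h : ∀ s t : Set Ω, MeasurableSet[x] s → MeasurableSet[y] t → μ (s ∩ t) = μ s * μ t)
    (f g : Lp ℝ 2 μ) :
    (inner ℝ (Q μ x f) (Q μ y g) : ℝ) = (∫ a, f a ∂μ) * ∫ a, g a ∂μ := by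
  have hInd : Indep x y μ := (Indep_iff x y μ).2 h
  set F := Q μ x f with hF
  set G := Q μ y g with hG
  have hFm : AEStronglyMeasurable[x] (F : Ω → ℝ) μ := by
    rw [hF, Q_eq_condexpL2 μ hx f]
    exact aestronglyMeasurable_condExpL2 hx f
  have hGm : AEStronglyMeasurable[y] (G : Ω → ℝ) μ := by
    rw [hG, Q_eq_condexpL2 μ hy g]
    exact aestronglyMeasurable_condExpL2 hy g
  obtain ⟨F', hF'sm, hFF'⟩ := hFm
  obtain ⟨G', hG'sm, hGG'⟩ := hGm
  have hIndF : IndepFun F' G' μ := by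
    have h1 : MeasurableSpace.comap F' inferInstance ≤ x := hF'sm.measurable.comap_le
    have h2 : MeasurableSpace.comap G' inferInstance ≤ y := hG'sm.measurable.comap_le
    exact indep_of_indep_of_le_right (indep_of_indep_of_le_left hInd h1) h2
  have hFi : Integrable F μ := (Lp.memLp F).integrable one_le_two
  have hGi : Integrable G μ := (Lp.memLp G).integrable one_le_two
  have key : ∫ a, F a * G a ∂μ = (∫ a, F a ∂μ) * ∫ a, G a ∂μ := by
    calc ∫ a, F a * G a ∂μ = ∫ a, F' a * G' a ∂μ :=
          integral_congr_ae (hFF'.mul hGG')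
      _ = (∫ a, F' a ∂μ) * ∫ a, G' a ∂μ :=
          hIndF.integral_mul_eq_mul_integral (hFi.congr hFF').aestronglyMeasurable (hGi.congr hGG').aestronglyMeasurable
      _ = (∫ a, F a ∂μ) * ∫ a, G a ∂μ := by
          rw [integral_congr_ae hFF', integral_congr_ae hGG']
  calc (inner ℝ F G : ℝ) = ∫ a, F a * G a ∂μ := by
        rw [@L2.inner_def Ω ℝ ℝ _ m0 μ _ _ F G]; simp [RCLike.inner_apply, mul_comm]
    _ = (∫ a, F a ∂μ) * ∫ a, G a ∂μ := key
    _ = (∫ a, f a ∂μ) * ∫ a, g a ∂μ := by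
        rw [hF, hG, integral_Q μ hx f, integral_Q μ hy g]

/-- The set of independent pairs `(x, y) ∈ Λ × Λ` is closed in the (metrizable) strong
operator topology: a strong limit of independent pairs is an independent pair. -/
theorem stmt12 {m0 : MeasurableSpace Ω} (μ : Measure Ω) [IsProbabilityMeasure μ]
    (x y : ℕ → MeasurableSpace Ω) (xl yl : MeasurableSpace Ω)
    (hx : ∀ n, InLam μ (x n)) (hy : ∀ n, InLam μ (y n))
    (hxl : InLam μ xl) (hyl : InLam μ yl)
    (hind : ∀ n, IndepSF μ (x n) (y n))
    (hlx : SOTLim μ x xl) (hly : SOTLim μ y yl) :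
    IndepSF μ xl yl := by
  intro s t hs ht
  set f : Lp ℝ 2 μ := indicatorConstLp 2 (hxl.1 s hs) (measure_ne_top μ s) (1 : ℝ) with hfdef
  set g : Lp ℝ 2 μ := indicatorConstLp 2 (hyl.1 t ht) (measure_ne_top μ t) (1 : ℝ) with hgdef
  have hQf : Q μ xl f = f :=
    Q_self μ hxl.1 (mem_lpMeas_indicatorConstLp hxl.1 hs (measure_ne_top μ s))
  have hQg : Q μ yl g = g :=
    Q_self μ hyl.1 (mem_lpMeas_indicatorConstLp hyl.1 ht (measure_ne_top μ t))
  have hconv : Tendsto (fun n => (inner ℝ (Q μ (x n) f) (Q μ (y n) g) : ℝ)) atTop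
      (𝓝 (inner ℝ f g : ℝ)) := by
    have := Filter.Tendsto.inner (𝕜 := ℝ) (hlx f) (hly g)
    rwa [hQf, hQg] at this
  have hconst : ∀ n, (inner ℝ (Q μ (x n) f) (Q μ (y n) g) : ℝ)
      = (∫ a, f a ∂μ) * ∫ a, g a ∂μ := fun n =>
    inner_Q_indep μ (hx n).1 (hy n).1 (hind n) f g
  have hlim : (inner ℝ f g : ℝ) = (∫ a, f a ∂μ) * ∫ a, g a ∂μ := by
    refine tendsto_nhds_unique hconv ?_
    simp only [hconst]
    exact tendsto_const_nhds
  have h1 : (inner ℝ f g : ℝ) = (μ (s ∩ t)).toReal := by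
    rw [hfdef, @L2.inner_indicatorConstLp_one Ω ℝ _ m0 μ s (hxl.1 s hs) (measure_ne_top μ s) g]
    rw [@setIntegral_congr_ae Ω ℝ m0 _ _ _ (t.indicator fun _ => (1:ℝ)) s μ (hxl.1 s hs) (indicatorConstLp_coeFn.mono fun a ha _ => ha)]
    rw [@setIntegral_indicator Ω ℝ m0 _ _ _ s t μ (hyl.1 t ht)]
    simp [Measure.restrict_apply (hxl.1 s hs), Set.inter_comm, measureReal_def]
  have h2 : ∫ a, f a ∂μ = (μ s).toReal := by
    rw [integral_congr_ae indicatorConstLp_coeFn, @integral_indicator_const Ω ℝ m0 _ _ μ _ (1:ℝ) s (hxl.1 s hs)]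
    simp [measureReal_def]
  have h3 : ∫ a, g a ∂μ = (μ t).toReal := by
    rw [integral_congr_ae indicatorConstLp_coeFn, @integral_indicator_const Ω ℝ m0 _ _ μ _ (1:ℝ) t (hyl.1 t ht)]
    simp [measureReal_def]
  rw [h1, h2, h3] at hlim
  rw [← ENNReal.toReal_mul] at hlim
  exact (ENNReal.toReal_eq_toReal_iff' (measure_ne_top μ _)
    (ENNReal.mul_ne_top (measure_ne_top μ _) (measure_ne_top μ _))).1 hlim
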